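/- Let α : ℝ → ℝ be a polynomial function of degree at most 2 with |α(1) − α(0)| < 2π. Then ∫₀¹ exp(i·α(s)) ds ≠ 0. -/

import Mathlib

open scoped Real
open intervalIntegral Set

lemma key_sin {a b : ℝ} (ha : 0 < a) (hab : a < b) :
    0 < ∫ t in a..b, Real.sin (t ^ 2 - a ^ 2) := by
  have huIcc : Set.uIcc a b = Set.Icc a b := Set.uIcc_of_le hab.le
  have hpos : ∀ x ∈ Set.uIcc a b, 0 < x := by
    rw [huIcc]; intro x hx; exact lt_of_lt_of_le ha hx.1
  -- IBP
  have hu : ∀ x ∈ Set.uIcc a b, HasDerivAt (fun t => (2 * t)⁻¹) (-(2 * x ^ 2)⁻¹) x := by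
    intro x hx
    have hx0 : x ≠ 0 := (hpos x hx).ne'
    have : HasDerivAt (fun t : ℝ => 2 * t) 2 x := by
      simpa using (hasDerivAt_id x).const_mul 2
    have := this.inv (by positivity)
    refine this.congr_deriv ?_
    field_simp
  have hv : ∀ x ∈ Set.uIcc a b, HasDerivAt (fun t => -Real.cos (t ^ 2 - a ^ 2))
      (2 * x * Real.sin (x ^ 2 - a ^ 2)) x := by
    intro x hx
    have h1 : HasDerivAt (fun t : ℝ => t ^ 2 - a ^ 2) (2 * x) x := by
      simpa using ((hasDerivAt_pow 2 x).sub_const (a ^ 2))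
    have := (Real.hasDerivAt_cos (x ^ 2 - a ^ 2)).comp x h1
    refine this.neg.congr_deriv ?_
    ring
  have hcontu' : ContinuousOn (fun x : ℝ => -(2 * x ^ 2)⁻¹) (Set.uIcc a b) := by
    apply ContinuousOn.neg
    apply ContinuousOn.inv₀ (by fun_prop)
    intro x hx; have := hpos x hx; positivity
  have hcontv' : Continuous (fun x : ℝ => 2 * x * Real.sin (x ^ 2 - a ^ 2)) := by fun_prop
  have hIu' : IntervalIntegrable (fun x : ℝ => -(2 * x ^ 2)⁻¹) MeasureTheory.volume a b :=
    hcontu'.intervalIntegrable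
  have hIv' : IntervalIntegrable (fun x : ℝ => 2 * x * Real.sin (x ^ 2 - a ^ 2))
      MeasureTheory.volume a b := hcontv'.intervalIntegrable a b
  have hibp := intervalIntegral.integral_mul_deriv_eq_deriv_mul hu hv hIu' hIv'
  have hcongr : ∫ t in a..b, Real.sin (t ^ 2 - a ^ 2)
      = ∫ x in a..b, (2 * x)⁻¹ * (2 * x * Real.sin (x ^ 2 - a ^ 2)) := by
    apply intervalIntegral.integral_congr
    intro x hx
    have hx0 : x ≠ 0 := (hpos x hx).ne'
    field_simp
  rw [hcongr, hibp]
  -- now goal: 0 < (2*b)⁻¹ * (-cos(b²-a²)) - (2*a)⁻¹ * (-cos(a²-a²)) - ∫ -(2x²)⁻¹ * (-cos(x²-a²))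
  have hsimp : (∫ x in a..b, -(2 * x ^ 2)⁻¹ * -Real.cos (x ^ 2 - a ^ 2))
      = ∫ x in a..b, (2 * x ^ 2)⁻¹ * Real.cos (x ^ 2 - a ^ 2) := by
    apply intervalIntegral.integral_congr; intro x _; ring
  rw [hsimp]
  -- strict bound on the remaining integral
  set c := min ((a + b) / 2) (Real.sqrt (a ^ 2 + 1)) with hc
  have hca : a < c := by
    apply lt_min (by linarith)
    exact (Real.lt_sqrt ha.le).2 (by linarith)
  have hcb : c ≤ b := le_trans (min_le_left _ _) (by linarith)
  have hc1 : c ^ 2 - a ^ 2 ≤ 1 := by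
    have h1 : c ≤ Real.sqrt (a ^ 2 + 1) := min_le_right _ _
    have h2 : c ^ 2 ≤ a ^ 2 + 1 := by
      nlinarith [Real.sq_sqrt (show (0:ℝ) ≤ a ^ 2 + 1 by positivity), ha.trans hca]
    linarith
  have hc0 : 0 < c ^ 2 - a ^ 2 := by nlinarith [ha.trans hca]
  have hlt : (∫ x in a..b, (2 * x ^ 2)⁻¹ * Real.cos (x ^ 2 - a ^ 2))
      < ∫ x in a..b, (2 * x ^ 2)⁻¹ := by
    apply intervalIntegral.integral_lt_integral_of_continuousOn_of_le_of_exists_lt hab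
    · apply ContinuousOn.mul
      · apply ContinuousOn.inv₀ (by fun_prop)
        intro x hx
        have : 0 < x := lt_of_lt_of_le ha hx.1
        positivity
      · fun_prop
    · apply ContinuousOn.inv₀ (by fun_prop)
      intro x hx
      have : 0 < x := lt_of_lt_of_le ha hx.1
      positivity
    · intro x hx
      have hx0 : 0 < x := lt_of_lt_of_le ha hx.1.le
      have : Real.cos (x ^ 2 - a ^ 2) ≤ 1 := Real.cos_le_one _
      nlinarith [inv_pos.2 (show (0:ℝ) < 2 * x ^ 2 by positivity)]
    · refine ⟨c, ⟨hca.le, hcb⟩, ?_⟩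
      have hcc : Real.cos (c ^ 2 - a ^ 2) < 1 := by
        have := Real.cos_lt_cos_of_nonneg_of_le_pi (le_refl 0) ?_ hc0
        · simpa using this
        · linarith [Real.pi_gt_three]
      have hcp : 0 < c := ha.trans hca
      nlinarith [inv_pos.2 (show (0:ℝ) < 2 * c ^ 2 by positivity)]
  have heval : (∫ x in a..b, (2 * x ^ 2)⁻¹) = (2 * a)⁻¹ - (2 * b)⁻¹ := by
    have : ∀ x ∈ Set.uIcc a b, HasDerivAt (fun t : ℝ => -(2 * t)⁻¹) ((2 * x ^ 2)⁻¹) x := by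
      intro x hx
      have := (hu x hx).neg
      refine this.congr_deriv ?_; ring
    rw [intervalIntegral.integral_eq_sub_of_hasDerivAt this]
    · ring
    · apply ContinuousOn.intervalIntegrable
      apply ContinuousOn.inv₀ (by fun_prop)
      intro x hx
      have := hpos x hx; positivity
  have hcosb : Real.cos (b ^ 2 - a ^ 2) ≤ 1 := Real.cos_le_one _
  have hb : 0 < b := ha.trans hab
  have h2b : (0:ℝ) < (2 * b)⁻¹ := by positivity
  rw [heval] at hlt
  simp only [sub_self, Real.cos_zero]
  nlinarith

set_option maxHeartbeats 1000000 in
lemma key_cos {b : ℝ} (hb : 0 < b) : 0 < ∫ t in (0:ℝ)..b, Real.cos (t ^ 2) := by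
  rcases le_or_gt (b ^ 2) (Real.pi / 2) with hsmall | hbig
  · apply intervalIntegral.intervalIntegral_pos_of_pos_on
    · exact (by fun_prop : Continuous fun t : ℝ => Real.cos (t ^ 2)).intervalIntegrable 0 b
    · intro x hx
      apply Real.cos_pos_of_mem_Ioo
      have hpi := Real.pi_pos
      refine Set.mem_Ioo.2 ⟨by nlinarith [sq_nonneg x], by nlinarith [hx.1, hx.2]⟩
    · exact hb
  · set r := Real.sqrt (Real.pi / 2) with hrdef
    have hpi : 0 < Real.pi := Real.pi_pos
    have hr2 : r ^ 2 = Real.pi / 2 := Real.sq_sqrt (by positivity)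
    have hr0 : 0 < r := Real.sqrt_pos.2 (by positivity)
    have hrb : r < b := by
      nlinarith
    -- split
    have hint : ∀ c d : ℝ, IntervalIntegrable (fun t : ℝ => Real.cos (t ^ 2))
        MeasureTheory.volume c d :=
      fun c d => (by fun_prop : Continuous fun t : ℝ => Real.cos (t ^ 2)).intervalIntegrable c d
    rw [← intervalIntegral.integral_add_adjacent_intervals (hint 0 r) (hint r b)]
    -- first piece lower bound
    have h1 : r - r ^ 5 / 10 ≤ ∫ t in (0:ℝ)..r, Real.cos (t ^ 2) := by
      have hmono : (∫ t in (0:ℝ)..r, (1 - t ^ 4 / 2)) ≤ ∫ t in (0:ℝ)..r, Real.cos (t ^ 2) := by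
        apply intervalIntegral.integral_mono_on hr0.le
        · exact ((by fun_prop : Continuous fun t : ℝ => 1 - t ^ 4 / 2).intervalIntegrable 0 r)
        · exact hint 0 r
        · intro x _
          have := Real.one_sub_sq_div_two_le_cos (x := x ^ 2)
          calc 1 - x ^ 4 / 2 = 1 - (x ^ 2) ^ 2 / 2 := by ring
          _ ≤ Real.cos (x ^ 2) := this
      have hcomp : (∫ t in (0:ℝ)..r, (1 - t ^ 4 / 2)) = r - r ^ 5 / 10 := by
        rw [intervalIntegral.integral_sub ((by fun_prop : Continuous fun _ : ℝ =>
          (1:ℝ)).intervalIntegrable 0 r) ((by fun_prop : Continuous fun t : ℝ =>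
          t ^ 4 / 2).intervalIntegrable 0 r)]
        simp only [intervalIntegral.integral_const, smul_eq_mul, mul_one]
        rw [intervalIntegral.integral_div, integral_pow]
        norm_num
        ring
      linarith [hcomp ▸ hmono]
    -- second piece lower bound via IBP
    have h2 : -(1 / r) ≤ ∫ t in r..b, Real.cos (t ^ 2) := by
      have huIcc : Set.uIcc r b = Set.Icc r b := Set.uIcc_of_le hrb.le
      have hpos : ∀ x ∈ Set.uIcc r b, 0 < x := by
        rw [huIcc]; intro x hx; exact lt_of_lt_of_le hr0 hx.1
      have hu : ∀ x ∈ Set.uIcc r b, HasDerivAt (fun t => (2 * t)⁻¹) (-(2 * x ^ 2)⁻¹) x := by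
        intro x hx
        have hx0 : x ≠ 0 := (hpos x hx).ne'
        have h2x : HasDerivAt (fun t : ℝ => 2 * t) 2 x := by
          simpa using (hasDerivAt_id x).const_mul 2
        have := h2x.inv (by positivity)
        refine this.congr_deriv ?_
        field_simp
      have hv : ∀ x ∈ Set.uIcc r b, HasDerivAt (fun t => Real.sin (t ^ 2))
          (2 * x * Real.cos (x ^ 2)) x := by
        intro x _
        have h1 : HasDerivAt (fun t : ℝ => t ^ 2) (2 * x) x := by
          simpa using (hasDerivAt_pow 2 x)
        have := (Real.hasDerivAt_sin (x ^ 2)).comp x h1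
        refine this.congr_deriv ?_
        ring
      have hcontu' : ContinuousOn (fun x : ℝ => -(2 * x ^ 2)⁻¹) (Set.uIcc r b) := by
        apply ContinuousOn.neg
        apply ContinuousOn.inv₀ (by fun_prop)
        intro x hx; have := hpos x hx; positivity
      have hIu' : IntervalIntegrable (fun x : ℝ => -(2 * x ^ 2)⁻¹) MeasureTheory.volume r b :=
        hcontu'.intervalIntegrable
      have hIv' : IntervalIntegrable (fun x : ℝ => 2 * x * Real.cos (x ^ 2))
          MeasureTheory.volume r b :=
        (by fun_prop : Continuous fun x : ℝ => 2 * x * Real.cos (x ^ 2)).intervalIntegrable r b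
      have hibp := intervalIntegral.integral_mul_deriv_eq_deriv_mul hu hv hIu' hIv'
      have hcongr : ∫ t in r..b, Real.cos (t ^ 2)
          = ∫ x in r..b, (2 * x)⁻¹ * (2 * x * Real.cos (x ^ 2)) := by
        apply intervalIntegral.integral_congr
        intro x hx
        have hx0 : x ≠ 0 := (hpos x hx).ne'
        field_simp
      rw [hcongr, hibp]
      have hsinr : Real.sin (r ^ 2) = 1 := by rw [hr2, Real.sin_pi_div_two]
      -- bound ∫ -(2x²)⁻¹ sin(x²) from above by ∫ (2x²)⁻¹ = 1/(2r) - 1/(2b)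
      have hb1 : (∫ x in r..b, -(2 * x ^ 2)⁻¹ * Real.sin (x ^ 2))
          ≤ ∫ x in r..b, (2 * x ^ 2)⁻¹ := by
        apply intervalIntegral.integral_mono_on hrb.le
        · exact hIu'.mul_continuousOn (by fun_prop)
        · exact hIu'.neg.congr (by
            intro x _; simp)
        · intro x hx
          have hx0 : 0 < x := lt_of_lt_of_le hr0 hx.1
          have h1 : |Real.sin (x ^ 2)| ≤ 1 := abs_le.2 ⟨Real.neg_one_le_sin _, Real.sin_le_one _⟩
          have h2 : (0:ℝ) < (2 * x ^ 2)⁻¹ := by positivity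
          nlinarith [Real.neg_one_le_sin (x ^ 2), Real.sin_le_one (x ^ 2)]
      have heval : (∫ x in r..b, (2 * x ^ 2)⁻¹) = (2 * r)⁻¹ - (2 * b)⁻¹ := by
        have hd : ∀ x ∈ Set.uIcc r b, HasDerivAt (fun t : ℝ => -(2 * t)⁻¹) ((2 * x ^ 2)⁻¹) x := by
          intro x hx
          have := (hu x hx).neg
          refine this.congr_deriv ?_; ring
        rw [intervalIntegral.integral_eq_sub_of_hasDerivAt hd]
        · ring
        · apply ContinuousOn.intervalIntegrable
          apply ContinuousOn.inv₀ (by fun_prop)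
          intro x hx; have := hpos x hx; positivity
      have hsb : -1 ≤ Real.sin (b ^ 2) := Real.neg_one_le_sin _
      have h2b : (0:ℝ) < (2 * b)⁻¹ := by positivity
      have h2r : (0:ℝ) < (2 * r)⁻¹ := by positivity
      have hrr : (2 * r)⁻¹ + (2 * r)⁻¹ = 1 / r := by
        rw [← two_mul, mul_inv, ← mul_assoc, mul_inv_cancel₀ two_ne_zero, one_mul, one_div]
      nlinarith [heval ▸ hb1]
    -- combine
    have hfin : 0 < r - r ^ 5 / 10 - 1 / r := by
      have hπ1 : (3.141592:ℝ) < Real.pi := Real.pi_gt_d6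
      have hπ2 : Real.pi < 3.15 := Real.pi_lt_d2
      have h5 : r ^ 5 = r * (Real.pi / 2) ^ 2 := by
        rw [show r ^ 5 = r * (r ^ 2) ^ 2 by ring, hr2]
      have heq : r - r ^ 5 / 10 - 1 / r = (r ^ 2 - r ^ 2 * (Real.pi / 2) ^ 2 / 10 - 1) / r := by
        rw [h5]; field_simp
      rw [heq, hr2]
      apply div_pos _ hr0
      have l1 : (1.57:ℝ) < Real.pi / 2 := by linarith
      have l2 : Real.pi / 2 < 1.575 := by linarith
      have e1 : (Real.pi / 2) ^ 2 < 2.480625 := by nlinarith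
      have e2 : Real.pi / 2 * (Real.pi / 2) ^ 2 < 3.907 := by nlinarith
      linarith
    linarith


lemma exp_I_cont (g : ℝ → ℝ) (hg : Continuous g) :
    Continuous fun t : ℝ => Complex.exp (Complex.I * (g t : ℂ)) := by fun_prop

lemma re_integral_exp {g : ℝ → ℝ} (hg : Continuous g) (a b : ℝ) :
    (∫ t in a..b, Complex.exp (Complex.I * (g t : ℂ))).re
      = ∫ t in a..b, Real.cos (g t) := by
  have hi : IntervalIntegrable (fun t => Complex.exp (Complex.I * (g t : ℂ)))
      MeasureTheory.volume a b := (exp_I_cont g hg).intervalIntegrable a b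
  have := (Complex.reCLM.intervalIntegral_comp_comm hi).symm
  simp only [Complex.reCLM_apply] at this
  rw [this]
  apply intervalIntegral.integral_congr
  intro x _
  show (Complex.exp (Complex.I * (g x : ℂ))).re = Real.cos (g x)
  rw [mul_comm]
  exact Complex.exp_ofReal_mul_I_re (g x)

lemma fresnel_nonneg {a b : ℝ} (ha : 0 ≤ a) (hab : a < b) :
    (∫ t in a..b, Complex.exp (Complex.I * ((t ^ 2 : ℝ) : ℂ))) ≠ 0 := by
  rcases eq_or_lt_of_le ha with rfl | hpos
  · -- a = 0 : positive real part
    intro hJ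
    have hre := re_integral_exp (g := fun t => t ^ 2) (by fun_prop) 0 b
    rw [hJ] at hre
    have := key_cos hab
    rw [← hre] at this
    simp at this
  · -- 0 < a : rotate by θ = a² + π/2
    intro hJ
    set θ := a ^ 2 + Real.pi / 2 with hθ
    have hkey : (∫ t in a..b, Complex.exp (Complex.I * ((t ^ 2 - θ : ℝ) : ℂ)))
        = Complex.exp (-(Complex.I * θ)) * ∫ t in a..b, Complex.exp (Complex.I * ((t ^ 2 : ℝ) : ℂ)) := by
      rw [← intervalIntegral.integral_const_mul]
      apply intervalIntegral.integral_congr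
      intro x _
      show Complex.exp (Complex.I * ((x ^ 2 - θ : ℝ) : ℂ))
          = Complex.exp (-(Complex.I * (θ : ℂ))) * Complex.exp (Complex.I * ((x ^ 2 : ℝ) : ℂ))
      rw [← Complex.exp_add]
      congr 1
      push_cast
      ring
    rw [hJ, mul_zero] at hkey
    have hre := re_integral_exp (g := fun t => t ^ 2 - θ) (by fun_prop) a b
    rw [hkey] at hre
    have hsin : (∫ t in a..b, Real.cos (t ^ 2 - θ)) = ∫ t in a..b, Real.sin (t ^ 2 - a ^ 2) := by
      apply intervalIntegral.integral_congr
      intro x _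
      show Real.cos (x ^ 2 - θ) = Real.sin (x ^ 2 - a ^ 2)
      rw [hθ, show x ^ 2 - (a ^ 2 + Real.pi / 2) = (x ^ 2 - a ^ 2) - Real.pi / 2 by ring,
        Real.cos_sub_pi_div_two]
    rw [hsin] at hre
    have := key_sin hpos hab
    rw [← hre] at this
    simp at this

lemma fresnel {a b : ℝ} (hab : a < b) :
    (∫ t in a..b, Complex.exp (Complex.I * ((t ^ 2 : ℝ) : ℂ))) ≠ 0 := by
  rcases le_or_gt 0 a with ha | ha
  · exact fresnel_nonneg ha hab
  rcases le_or_gt b 0 with hb | hb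
  · -- reflect
    have heven : (∫ t in a..b, Complex.exp (Complex.I * ((t ^ 2 : ℝ) : ℂ)))
        = ∫ t in (-b)..(-a), Complex.exp (Complex.I * ((t ^ 2 : ℝ) : ℂ)) := by
      have h := intervalIntegral.integral_comp_neg (a := a) (b := b)
        (fun t : ℝ => Complex.exp (Complex.I * ((t ^ 2 : ℝ) : ℂ)))
      simpa [neg_sq] using h
    rw [heven]
    exact fresnel_nonneg (by linarith) (by linarith)
  · -- a < 0 < b : positive real part
    intro hJ
    have hre := re_integral_exp (g := fun t => t ^ 2) (by fun_prop) a b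
    have hint : ∀ c d : ℝ, IntervalIntegrable (fun t : ℝ => Real.cos (t ^ 2))
        MeasureTheory.volume c d :=
      fun c d => (by fun_prop : Continuous fun t : ℝ => Real.cos (t ^ 2)).intervalIntegrable c d
    have hsplit : (∫ t in a..b, Real.cos (t ^ 2))
        = (∫ t in a..(0:ℝ), Real.cos (t ^ 2)) + ∫ t in (0:ℝ)..b, Real.cos (t ^ 2) :=
      (intervalIntegral.integral_add_adjacent_intervals (hint a 0) (hint 0 b)).symm
    have hneg : (∫ t in a..(0:ℝ), Real.cos (t ^ 2)) = ∫ t in (0:ℝ)..(-a), Real.cos (t ^ 2) := by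
      have h := intervalIntegral.integral_comp_neg (a := a) (b := (0:ℝ))
        (fun t : ℝ => Real.cos (t ^ 2))
      simpa [neg_sq] using h
    have h1 : 0 < ∫ t in (0:ℝ)..(-a), Real.cos (t ^ 2) := key_cos (by linarith)
    have h2 : 0 < ∫ t in (0:ℝ)..b, Real.cos (t ^ 2) := key_cos hb
    rw [hJ] at hre
    rw [hsplit, hneg] at hre
    simp at hre
    linarith


lemma quad_pos (A B C : ℝ) (hA : 0 < A) :
    (∫ s in (0:ℝ)..1, Complex.exp (Complex.I * ((A * s ^ 2 + B * s + C : ℝ) : ℂ))) ≠ 0 := by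
  set d := Real.sqrt A with hd
  have hd0 : 0 < d := Real.sqrt_pos.2 hA
  have hd2 : d ^ 2 = A := Real.sq_sqrt hA.le
  set e := B / (2 * d) with he
  set K := C - B ^ 2 / (4 * A) with hK
  have hBe : B = 2 * d * e := by rw [he]; field_simp
  have hKe : e ^ 2 = B ^ 2 / (4 * A) := by
    rw [he, ← hd2, div_pow]
    congr 1
    ring
  have hpt : ∀ s : ℝ, A * s ^ 2 + B * s + C = (d * s + e) ^ 2 + K := by
    intro s
    calc A * s ^ 2 + B * s + C = d ^ 2 * s ^ 2 + 2 * d * e * s + C := by rw [hd2, ← hBe]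
      _ = (d * s + e) ^ 2 + (C - e ^ 2) := by ring
      _ = (d * s + e) ^ 2 + K := by rw [hK, hKe]
  have hsplit : (∫ s in (0:ℝ)..1, Complex.exp (Complex.I * ((A * s ^ 2 + B * s + C : ℝ) : ℂ)))
      = Complex.exp (Complex.I * (K : ℂ))
        * ∫ s in (0:ℝ)..1, (fun t : ℝ => Complex.exp (Complex.I * ((t ^ 2 : ℝ) : ℂ))) (d * s + e) := by
    rw [← intervalIntegral.integral_const_mul]
    apply intervalIntegral.integral_congr
    intro x _
    show Complex.exp (Complex.I * ((A * x ^ 2 + B * x + C : ℝ) : ℂ))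
        = Complex.exp (Complex.I * (K : ℂ)) * Complex.exp (Complex.I * (((d * x + e) ^ 2 : ℝ) : ℂ))
    rw [← Complex.exp_add]
    congr 1
    rw [hpt x]
    push_cast
    ring
  rw [hsplit]
  apply mul_ne_zero (Complex.exp_ne_zero _)
  have hsub := intervalIntegral.integral_comp_mul_add (a := (0:ℝ)) (b := 1)
    (fun t : ℝ => Complex.exp (Complex.I * ((t ^ 2 : ℝ) : ℂ))) hd0.ne' e
  rw [hsub]
  apply smul_ne_zero (inv_ne_zero hd0.ne')
  have : d * 0 + e < d * 1 + e := by linarith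
  exact fresnel this

set_option maxHeartbeats 1000000 in
/-- If `α` is a polynomial of degree at most 2 with `|α(1) − α(0)| < 2π`,
then `∫₀¹ exp(i·α(s)) ds ≠ 0`. -/
theorem integral_exp_clothoid_ne_zero
    (P : Polynomial ℝ) (hP : P.natDegree ≤ 2)
    (h : |P.eval 1 - P.eval 0| < 2 * π) :
    (∫ s in (0:ℝ)..1, Complex.exp (Complex.I * (P.eval s))) ≠ 0 := by
  set A := P.coeff 2 with hA
  set B := P.coeff 1 with hB
  set C := P.coeff 0 with hC
  have heval : ∀ x : ℝ, P.eval x = A * x ^ 2 + B * x + C := by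
    intro x
    rw [Polynomial.eval_eq_sum_range' (n := 3) (lt_of_le_of_lt hP (by norm_num)) x]
    simp [Finset.sum_range_succ]
    ring
  have hsum : P.eval 1 - P.eval 0 = A + B := by
    rw [heval 1, heval 0]; ring
  rw [hsum] at h
  simp only [heval]
  rcases lt_trichotomy A 0 with hAneg | hA0 | hApos
  · -- conjugate
    have hi : IntervalIntegrable
        (fun s : ℝ => Complex.exp (Complex.I * ((-A * s ^ 2 + -B * s + -C : ℝ) : ℂ)))
        MeasureTheory.volume 0 1 := by
      apply Continuous.intervalIntegrable
      fun_prop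
    have hconj : (∫ s in (0:ℝ)..1, Complex.exp (Complex.I * ((A * s ^ 2 + B * s + C : ℝ) : ℂ)))
        = (starRingEnd ℂ)
            (∫ s in (0:ℝ)..1, Complex.exp (Complex.I * ((-A * s ^ 2 + -B * s + -C : ℝ) : ℂ))) := by
      have hcomm := (Complex.conjCLE.toContinuousLinearMap).intervalIntegral_comp_comm hi
      simp only [ContinuousLinearEquiv.coe_coe, Complex.conjCLE_apply] at hcomm
      rw [← hcomm]
      apply intervalIntegral.integral_congr
      intro x _
      show Complex.exp (Complex.I * ((A * x ^ 2 + B * x + C : ℝ) : ℂ))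
          = (starRingEnd ℂ) (Complex.exp (Complex.I * ((-A * x ^ 2 + -B * x + -C : ℝ) : ℂ)))
      rw [← Complex.exp_conj]
      congr 1
      rw [map_mul, Complex.conj_I, Complex.conj_ofReal]
      push_cast
      ring
    rw [hconj]
    simp only [ne_eq, map_eq_zero]
    exact quad_pos (-A) (-B) (-C) (by linarith)
  · -- linear case
    rcases eq_or_ne B 0 with hB0 | hB0
    · -- constant
      have : (∫ s in (0:ℝ)..1, Complex.exp (Complex.I * ((A * s ^ 2 + B * s + C : ℝ) : ℂ)))
          = Complex.exp (Complex.I * (C : ℂ)) := by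
        rw [show (∫ s in (0:ℝ)..1, Complex.exp (Complex.I * ((A * s ^ 2 + B * s + C : ℝ) : ℂ)))
            = ∫ _ in (0:ℝ)..1, Complex.exp (Complex.I * (C : ℂ)) from
          intervalIntegral.integral_congr (by
            intro x _
            show Complex.exp (Complex.I * ((A * x ^ 2 + B * x + C : ℝ) : ℂ))
                = Complex.exp (Complex.I * (C : ℂ))
            rw [hA0, hB0]; norm_num)]
        simp
      rw [this]
      exact Complex.exp_ne_zero _
    · -- nonconstant linear
      have hIB : (Complex.I * B) ≠ 0 :=
        mul_ne_zero Complex.I_ne_zero (by exact_mod_cast hB0)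
      have hftc : (∫ s in (0:ℝ)..1, Complex.exp (Complex.I * ((A * s ^ 2 + B * s + C : ℝ) : ℂ)))
          = (Complex.I * B)⁻¹ * (Complex.exp (Complex.I * ((B + C : ℝ) : ℂ))
              - Complex.exp (Complex.I * ((C : ℝ) : ℂ))) := by
        have hderiv : ∀ x ∈ Set.uIcc (0:ℝ) 1,
            HasDerivAt (fun s : ℝ => (Complex.I * B)⁻¹ * Complex.exp (Complex.I * ((B * s + C : ℝ) : ℂ)))
              (Complex.exp (Complex.I * ((A * x ^ 2 + B * x + C : ℝ) : ℂ))) x := by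
          intro x _
          have h1 : HasDerivAt (fun s : ℝ => ((B * s + C : ℝ) : ℂ)) (B : ℂ) x := by
            have h0 : HasDerivAt (fun s : ℝ => B * s + C) B x := by
              simpa using ((hasDerivAt_id x).const_mul B).add_const C
            exact_mod_cast h0.ofReal_comp
          have h2 : HasDerivAt (fun s : ℝ => Complex.I * ((B * s + C : ℝ) : ℂ))
              (Complex.I * B) x := h1.const_mul Complex.I
          have h3 := h2.cexp
          have h4 := h3.const_mul (Complex.I * B)⁻¹
          have hexp : Complex.exp (Complex.I * ((A * x ^ 2 + B * x + C : ℝ) : ℂ))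
              = Complex.exp (Complex.I * ((B * x + C : ℝ) : ℂ)) := by rw [hA0]; norm_num
          refine h4.congr_deriv ?_
          rw [hexp]
          field_simp
          exact div_self (by exact_mod_cast hB0)
        rw [intervalIntegral.integral_eq_sub_of_hasDerivAt hderiv (by
          apply Continuous.intervalIntegrable; fun_prop)]
        push_cast
        ring_nf
      rw [hftc]
      apply mul_ne_zero (inv_ne_zero hIB)
      intro heq
      rw [sub_eq_zero] at heq
      rw [Complex.exp_eq_exp_iff_exists_int] at heq
      obtain ⟨n, hn⟩ := heq
      have hBn : (B : ℂ) = n * (2 * π) := by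
        have h2 : Complex.I * (B : ℂ) = Complex.I * ((n : ℂ) * (2 * π)) := by
          push_cast at hn ⊢
          linear_combination hn
        exact mul_left_cancel₀ Complex.I_ne_zero h2
      have hBr : B = n * (2 * π) := by exact_mod_cast hBn
      rw [hA0, zero_add] at h
      have hn0 : n ≠ 0 := by
        rintro rfl
        exact hB0 (by rw [hBr]; norm_num)
      have h1 : (1:ℝ) ≤ |(n:ℝ)| := by exact_mod_cast Int.one_le_abs hn0
      have habs : |B| = |(n:ℝ)| * (2 * π) := by
        rw [hBr, abs_mul, abs_of_pos (show (0:ℝ) < 2 * π by positivity)]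
      nlinarith [Real.pi_pos]
  · exact quad_pos A B C hApos
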